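/- (Core Lyapunov estimate of Proposition 7: nonlinearly parameterized regression.) Let q ≤ p be positive integers, 𝒮 : ℝ^q → ℝ^p a map, P ∈ ℝ^{q×p} a matrix and ρ > 0 such that (a − b)ᵀ·P·(𝒮(a) − 𝒮(b)) ≥ ρ·|a − b|² for all a, b ∈ ℝ^q (strong P-monotonicity). Let θ ∈ ℝ^q, γ > 0, Δ : [0,∞) → ℝ continuous, and let θ̂ : [0,∞) → ℝ^q be differentiable with θ̂'(t) = −γ·Δ(t)²·P·(𝒮(θ̂(t)) − 𝒮(θ)) for all t ≥ 0. Then for all 0 ≤ t ≤ s: |θ̂(s) − θ|² ≤ exp( −2ργ·∫_t^s Δ(τ)² dτ )·|θ̂(t) − θ|². Consequently, if Δ is persistently exciting, i.e., there exist T > 0 and μ > 0 with ∫_t^{t+T} Δ(τ)² dτ ≥ μ for all t ≥ 0, then θ̂(t) converges to θ exponentially fast. -/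

import Mathlib

open Matrix

lemma my_hasDerivAt_dot {n : ℕ} (f : ℝ → Fin n → ℝ) (θ : Fin n → ℝ) (v : Fin n → ℝ) (x : ℝ)
    (hf : HasDerivAt f v x) :
    HasDerivAt (fun s => (f s - θ) ⬝ᵥ (f s - θ)) (2 * ((f x - θ) ⬝ᵥ v)) x := by
  have hcomp : ∀ i : Fin n, HasDerivAt (fun s => (f s i - θ i) * (f s i - θ i))
      (v i * (f x i - θ i) + (f x i - θ i) * v i) x := fun i =>
    ((hasDerivAt_pi.mp hf i).sub_const (θ i)).mul ((hasDerivAt_pi.mp hf i).sub_const (θ i))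
  have h := HasDerivAt.fun_sum (u := Finset.univ) (fun i (_ : i ∈ Finset.univ) => hcomp i)
  have e1 : (fun y => ∑ i : Fin n, (f y i - θ i) * (f y i - θ i))
      = fun s => (f s - θ) ⬝ᵥ (f s - θ) := by
    funext s; simp [dotProduct]
  have e2 : (∑ i : Fin n, (v i * (f x i - θ i) + (f x i - θ i) * v i))
      = 2 * ((f x - θ) ⬝ᵥ v) := by
    simp only [dotProduct, Pi.sub_apply]
    rw [Finset.mul_sum]
    apply Finset.sum_congr rfl
    intro i _
    ring
  rw [e1, e2] at h
  exact h

lemma my_gronwall (V h : ℝ → ℝ) (hh : Continuous h) (t s : ℝ) (hts : t ≤ s)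
    (hV : ∀ u ∈ Set.Ici t, ∃ d, HasDerivAt V d u ∧ d ≤ -(h u) * V u) :
    V s ≤ Real.exp (-∫ τ in t..s, h τ) * V t := by
  set F : ℝ → ℝ := fun u => ∫ τ in t..u, h τ with hF
  have hFderiv : ∀ u : ℝ, HasDerivAt F (h u) u := fun u =>
    intervalIntegral.integral_hasDerivAt_right (hh.intervalIntegrable t u)
      (hh.stronglyMeasurableAtFilter _ _) hh.continuousAt
  set g : ℝ → ℝ := fun u => V u * Real.exp (F u) with hg
  have hgderiv : ∀ u ∈ Set.Ici t, ∃ d, HasDerivAt g d u ∧ d ≤ 0 := by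
    intro u hu
    obtain ⟨d, hd, hdle⟩ := hV u hu
    refine ⟨d * Real.exp (F u) + V u * (Real.exp (F u) * h u), ?_, ?_⟩
    · exact hd.mul ((hFderiv u).exp)
    · have hexp : 0 < Real.exp (F u) := Real.exp_pos _
      nlinarith [hexp]
  have hanti : AntitoneOn g (Set.Ici t) := by
    apply antitoneOn_of_deriv_nonpos (convex_Ici t)
    · intro u hu
      obtain ⟨d, hd, _⟩ := hgderiv u hu
      exact hd.continuousAt.continuousWithinAt
    · intro u hu
      obtain ⟨d, hd, _⟩ := hgderiv u (interior_subset hu)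
      exact hd.differentiableAt.differentiableWithinAt
    · intro u hu
      obtain ⟨d, hd, hdle⟩ := hgderiv u (interior_subset hu)
      rw [hd.deriv]; exact hdle
  have hgs : g s ≤ g t := hanti (Set.self_mem_Ici) hts hts
  have hgt : g t = V t := by simp [hg, hF]
  have hgs' : V s * Real.exp (F s) ≤ V t := by rwa [hgt] at hgs
  have := mul_le_mul_of_nonneg_right hgs' (Real.exp_nonneg (-(F s)))
  rw [mul_assoc, ← Real.exp_add, add_neg_cancel, Real.exp_zero, mul_one] at this
  calc V s ≤ V t * Real.exp (-F s) := this
    _ = Real.exp (-∫ τ in t..s, h τ) * V t := by rw [mul_comm]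

lemma my_pe_integral (Δ : ℝ → ℝ) (hΔ : Continuous Δ) (T μ : ℝ) (hT : 0 < T)
    (hPE : ∀ t ≥ (0:ℝ), μ ≤ ∫ τ in t..(t+T), (Δ τ)^2) :
    ∀ n : ℕ, ∀ t : ℝ, (n : ℝ) * T ≤ t → 0 ≤ t → μ * n ≤ ∫ τ in (0:ℝ)..t, (Δ τ)^2 := by
  have hcont : Continuous (fun τ => (Δ τ)^2) := hΔ.pow 2
  intro n
  induction n with
  | zero =>
    intro t _ ht
    simp only [Nat.cast_zero, mul_zero]
    exact intervalIntegral.integral_nonneg ht (fun x _ => sq_nonneg _)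
  | succ n ih =>
    intro t hnt ht
    have hTn : (0:ℝ) ≤ (n:ℝ) * T := by positivity
    have htT : (n:ℝ) * T ≤ t - T := by
      push_cast at hnt; linarith
    have htT0 : 0 ≤ t - T := le_trans hTn htT
    have hsplit : (∫ τ in (0:ℝ)..(t-T), (Δ τ)^2) + (∫ τ in (t-T)..t, (Δ τ)^2)
        = ∫ τ in (0:ℝ)..t, (Δ τ)^2 :=
      intervalIntegral.integral_add_adjacent_intervals
        (hcont.intervalIntegrable _ _) (hcont.intervalIntegrable _ _)
    have hpe := hPE (t - T) htT0
    rw [show t - T + T = t by ring] at hpe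
    have hih := ih (t - T) htT htT0
    push_cast
    linarith


/-- Core Lyapunov estimate of Proposition 7 (nonlinearly parameterized
regression): under strong `P`-monotonicity of `𝒮` the squared estimation error
contracts at rate `exp(−2ργ ∫ Δ²)`, and persistent excitation of `Δ` yields
exponential convergence. -/
theorem nlpre_lyapunov_estimate
    (q p : ℕ) (hq : 0 < q) (hqp : q ≤ p)
    (S : (Fin q → ℝ) → (Fin p → ℝ)) (P : Matrix (Fin q) (Fin p) ℝ)
    (ρ : ℝ) (hρ : 0 < ρ)
    (hmono : ∀ a b : Fin q → ℝ,
      ρ * ((a - b) ⬝ᵥ (a - b)) ≤ (a - b) ⬝ᵥ P.mulVec (S a - S b))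
    (θ : Fin q → ℝ) (γ : ℝ) (hγ : 0 < γ)
    (Δ : ℝ → ℝ) (hΔcont : Continuous Δ)
    (θhat : ℝ → Fin q → ℝ)
    (hθhat : ∀ t ≥ (0 : ℝ), HasDerivAt θhat
      ((-(γ * (Δ t) ^ 2)) • P.mulVec (S (θhat t) - S θ)) t) :
    (∀ t s : ℝ, 0 ≤ t → t ≤ s →
      (θhat s - θ) ⬝ᵥ (θhat s - θ)
        ≤ Real.exp (-(2 * ρ * γ) * ∫ τ in t..s, (Δ τ) ^ 2)
            * ((θhat t - θ) ⬝ᵥ (θhat t - θ))) ∧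
    ((∃ T > (0 : ℝ), ∃ μ > (0 : ℝ), ∀ t ≥ (0 : ℝ), μ ≤ ∫ τ in t..(t + T), (Δ τ) ^ 2) →
      ∃ M : ℝ, 0 ≤ M ∧ ∃ lam > (0 : ℝ), ∀ t ≥ (0 : ℝ),
        Real.sqrt ((θhat t - θ) ⬝ᵥ (θhat t - θ)) ≤ M * Real.exp (-lam * t)) := by
  have hcont2 : Continuous (fun τ => 2 * ρ * γ * (Δ τ)^2) := by fun_prop
  have part1 : ∀ t s : ℝ, 0 ≤ t → t ≤ s →
      (θhat s - θ) ⬝ᵥ (θhat s - θ)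
        ≤ Real.exp (-(2 * ρ * γ) * ∫ τ in t..s, (Δ τ) ^ 2)
            * ((θhat t - θ) ⬝ᵥ (θhat t - θ)) := by
    intro t s ht hts
    have key := my_gronwall (fun u => (θhat u - θ) ⬝ᵥ (θhat u - θ))
      (fun u => 2 * ρ * γ * (Δ u)^2) hcont2 t s hts ?_
    · rw [intervalIntegral.integral_const_mul, ← neg_mul] at key
      exact key
    · intro u hu
      have hu0 : (0:ℝ) ≤ u := le_trans ht hu
      refine ⟨2 * ((θhat u - θ) ⬝ᵥ ((-(γ * (Δ u)^2)) • P.mulVec (S (θhat u) - S θ))), ?_, ?_⟩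
      · exact my_hasDerivAt_dot θhat θ _ u (hθhat u hu0)
      · rw [dotProduct_smul, smul_eq_mul]
        have hm := hmono (θhat u) θ
        have hnn : (0:ℝ) ≤ γ * (Δ u)^2 := by positivity
        show 2 * (-(γ * (Δ u)^2) * ((θhat u - θ) ⬝ᵥ P.mulVec (S (θhat u) - S θ)))
          ≤ -(2 * ρ * γ * (Δ u)^2) * ((θhat u - θ) ⬝ᵥ (θhat u - θ))
        nlinarith [mul_nonneg hnn (sub_nonneg.mpr hm)]
  refine ⟨part1, ?_⟩
  rintro ⟨T, hT, μ, hμ, hPE⟩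
  set V0 : ℝ := (θhat 0 - θ) ⬝ᵥ (θhat 0 - θ) with hV0def
  have hV0 : 0 ≤ V0 := Finset.sum_nonneg (fun i _ => mul_self_nonneg _)
  refine ⟨Real.sqrt V0 * Real.exp (ρ * γ * μ),
    by positivity, ρ * γ * μ / T, by positivity, ?_⟩
  intro t ht
  set I : ℝ := ∫ τ in (0:ℝ)..t, (Δ τ)^2 with hIdef
  have hVt : 0 ≤ (θhat t - θ) ⬝ᵥ (θhat t - θ) :=
    Finset.sum_nonneg (fun i _ => mul_self_nonneg _)
  -- lower bound on the integral
  set n : ℕ := ⌊t / T⌋₊ with hn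
  have hnle : (n:ℝ) * T ≤ t := by
    have := Nat.floor_le (div_nonneg ht hT.le)
    calc (n:ℝ) * T ≤ (t / T) * T := by nlinarith
      _ = t := by field_simp
  have hnlt : t / T - 1 ≤ (n:ℝ) := by
    have := Nat.lt_floor_add_one (t / T)
    linarith
  have hIlb : μ * (t / T - 1) ≤ I := by
    have h1 := my_pe_integral Δ hΔcont T μ hT hPE n t hnle ht
    nlinarith
  -- combine with part 1
  have hest := part1 0 t le_rfl ht
  have hexp : Real.exp (-(2 * ρ * γ) * I) ≤ Real.exp (-(2 * ρ * γ) * (μ * (t / T - 1))) := by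
    apply Real.exp_le_exp.mpr
    nlinarith [mul_nonneg (by positivity : (0:ℝ) ≤ 2 * ρ * γ) (sub_nonneg.mpr hIlb)]
  have hVbound : (θhat t - θ) ⬝ᵥ (θhat t - θ)
      ≤ Real.exp (-(2 * ρ * γ) * (μ * (t / T - 1))) * V0 := by
    calc (θhat t - θ) ⬝ᵥ (θhat t - θ) ≤ Real.exp (-(2 * ρ * γ) * I) * V0 := hest
      _ ≤ Real.exp (-(2 * ρ * γ) * (μ * (t / T - 1))) * V0 :=
        mul_le_mul_of_nonneg_right hexp hV0
  have hsqrt := Real.sqrt_le_sqrt hVbound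
  rw [Real.sqrt_mul (Real.exp_nonneg _)] at hsqrt
  have hse : Real.sqrt (Real.exp (-(2 * ρ * γ) * (μ * (t / T - 1))))
      = Real.exp (ρ * γ * μ) * Real.exp (-(ρ * γ * μ / T) * t) := by
    rw [← Real.exp_add]
    rw [show Real.exp (-(2 * ρ * γ) * (μ * (t / T - 1)))
        = Real.exp (ρ * γ * μ + -(ρ * γ * μ / T) * t) ^ 2 by
      rw [← Real.exp_nat_mul]; congr 1; push_cast; field_simp; ring]
    exact Real.sqrt_sq (Real.exp_nonneg _)
  calc Real.sqrt ((θhat t - θ) ⬝ᵥ (θhat t - θ))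
      ≤ Real.sqrt (Real.exp (-(2 * ρ * γ) * (μ * (t / T - 1)))) * Real.sqrt V0 := hsqrt
    _ = Real.sqrt V0 * Real.exp (ρ * γ * μ) * Real.exp (-(ρ * γ * μ / T) * t) := by
        rw [hse]; ring
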